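/- For every integer m ≥ 2 and every integer n ≥ 1, the subgroup of GL₂(ℤ/mℤ) generated by the matrices [[0,−1],[1,1]] and [[0,1],[1,0]], and the subgroup generated by the matrices [[1,0],[0,−1]] and [[0,1],[−1,0]], are each split liftable modulo mn. -/
import Mathlib


open scoped MatrixGroups

/-- The reduction map `GL₂(ℤ/nℤ) → GL₂(ℤ/mℤ)` for `m ∣ n`, induced by entrywise reduction. -/
def glRedZMod {m n : ℕ} (h : m ∣ n) : GL (Fin 2) (ZMod n) →* GL (Fin 2) (ZMod m) :=
  Units.map ((ZMod.castHom h (ZMod m)).mapMatrix).toMonoidHom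

/-- A subgroup `G` of `GL₂(ℤ/mℤ)` is split liftable modulo `mn`: there is a subgroup `G'` of
`GL₂(ℤ/mnℤ)` such that the entrywise reduction homomorphism `GL₂(ℤ/mnℤ) → GL₂(ℤ/mℤ)`
restricts to an isomorphism from `G'` onto `G`. -/
def SplitLiftable (m n : ℕ) (G : Subgroup (GL (Fin 2) (ZMod m))) : Prop :=
  ∃ G' : Subgroup (GL (Fin 2) (ZMod (m * n))),
    Subgroup.map (glRedZMod (dvd_mul_right m n)) G' = G ∧
    ∀ x ∈ G', ∀ y ∈ G',
      glRedZMod (dvd_mul_right m n) x = glRedZMod (dvd_mul_right m n) y → x = y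

/-- The matrix `[[0,-1],[1,1]]` as an element of `GL₂(R)`. -/
def glA (R : Type*) [CommRing R] : GL (Fin 2) R :=
  ⟨!![0, -1; 1, 1], !![1, 1; -1, 0],
    by ext i j; fin_cases i <;> fin_cases j <;> norm_num [Matrix.mul_apply, Fin.sum_univ_two],
    by ext i j; fin_cases i <;> fin_cases j <;> norm_num [Matrix.mul_apply, Fin.sum_univ_two]⟩

/-- The matrix `[[0,1],[1,0]]` as an element of `GL₂(R)`. -/
def glB (R : Type*) [CommRing R] : GL (Fin 2) R :=
  ⟨!![0, 1; 1, 0], !![0, 1; 1, 0],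
    by ext i j; fin_cases i <;> fin_cases j <;> norm_num [Matrix.mul_apply, Fin.sum_univ_two],
    by ext i j; fin_cases i <;> fin_cases j <;> norm_num [Matrix.mul_apply, Fin.sum_univ_two]⟩

/-- The matrix `[[1,0],[0,-1]]` as an element of `GL₂(R)`. -/
def glC (R : Type*) [CommRing R] : GL (Fin 2) R :=
  ⟨!![1, 0; 0, -1], !![1, 0; 0, -1],
    by ext i j; fin_cases i <;> fin_cases j <;> norm_num [Matrix.mul_apply, Fin.sum_univ_two],
    by ext i j; fin_cases i <;> fin_cases j <;> norm_num [Matrix.mul_apply, Fin.sum_univ_two]⟩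

/-- The matrix `[[0,1],[-1,0]]` as an element of `GL₂(R)`. -/
def glD (R : Type*) [CommRing R] : GL (Fin 2) R :=
  ⟨!![0, 1; -1, 0], !![0, -1; 1, 0],
    by ext i j; fin_cases i <;> fin_cases j <;> norm_num [Matrix.mul_apply, Fin.sum_univ_two],
    by ext i j; fin_cases i <;> fin_cases j <;> norm_num [Matrix.mul_apply, Fin.sum_univ_two]⟩

def intRed (k : ℕ) : GL (Fin 2) ℤ →* GL (Fin 2) (ZMod k) :=
  Units.map ((Int.castRingHom (ZMod k)).mapMatrix).toMonoidHom

lemma red_comm (m n : ℕ) (x : GL (Fin 2) ℤ) :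
    glRedZMod (dvd_mul_right m n) (intRed (m*n) x) = intRed m x := by
  have hf : (⇑(ZMod.castHom (dvd_mul_right m n) (ZMod m)) ∘ ⇑(Int.castRingHom (ZMod (m*n)))) =
      ⇑(Int.castRingHom (ZMod m)) := by
    funext a
    exact map_intCast ((ZMod.castHom (dvd_mul_right m n) (ZMod m)).comp (Int.castRingHom (ZMod (m*n)))) a
  apply Units.ext
  show ((x.val).map ⇑(Int.castRingHom (ZMod (m*n)))).map ⇑(ZMod.castHom (dvd_mul_right m n) (ZMod m))
      = (x.val).map ⇑(Int.castRingHom (ZMod m))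
  rw [Matrix.map_map, hf]

lemma entry_eq (m : ℕ) (hm : 3 ≤ m) {a b : ℤ} (h : (a : ZMod m) = (b : ZMod m))
    (h2 : a.natAbs ≤ 1) (h3 : b.natAbs ≤ 1) : a = b := by
  have hmod := (ZMod.intCast_eq_intCast_iff _ _ _).mp h
  have hd : (m : ℤ) ∣ b - a := Int.ModEq.dvd hmod
  by_cases hba : b - a = 0
  · omega
  · have h5 : (m : ℤ) ≤ |b - a| := Int.le_of_dvd (abs_pos.mpr hba) ((dvd_abs _ _).mpr hd)
    rw [Int.abs_eq_natAbs] at h5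
    omega

lemma hker_of (m : ℕ) (hm : 3 ≤ m) (X : Matrix (Fin 2) (Fin 2) ℤ)
    (hX : ∀ i j, (X i j).natAbs ≤ 1)
    (h : X.map (Int.cast : ℤ → ZMod m) = 1) : X = 1 := by
  ext i j
  have h' := congrFun (congrFun h i) j
  rw [Matrix.map_apply] at h'
  have hone : (1 : Matrix (Fin 2) (Fin 2) (ZMod m)) i j
      = (((if i = j then 1 else 0 : ℤ) : ZMod m)) := by
    by_cases hij : i = j <;> simp [Matrix.one_apply, hij]
  rw [hone] at h'
  have hb : ((if i = j then 1 else 0 : ℤ)).natAbs ≤ 1 := by split <;> simp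
  have := entry_eq m hm h' (hX i j) hb
  rw [this]
  by_cases hij : i = j <;> simp [Matrix.one_apply, hij]
lemma master (m n : ℕ) (s : Set (GL (Fin 2) ℤ)) (T : List (Matrix (Fin 2) (Fin 2) ℤ))
    (hT1 : (1 : Matrix (Fin 2) (Fin 2) ℤ) ∈ T)
    (hTmul : ∀ X ∈ T, ∀ Y ∈ T, X * Y ∈ T)
    (hgen : ∀ g ∈ s, (g : GL (Fin 2) ℤ).val ∈ T ∧ ((g⁻¹ : GL (Fin 2) ℤ)).val ∈ T)
    (hker : ∀ X ∈ T, X.map (Int.cast : ℤ → ZMod m) = 1 → X = 1)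
    (G : Subgroup (GL (Fin 2) (ZMod m)))
    (himg : Subgroup.closure ((intRed m) '' s) = G) :
    SplitLiftable m n G := by
  refine ⟨Subgroup.map (intRed (m*n)) (Subgroup.closure s), ?_, ?_⟩
  · rw [Subgroup.map_map, ← himg, ← MonoidHom.map_closure]
    congr 1
    exact MonoidHom.ext (red_comm m n)
  · have hmem : ∀ c, c ∈ Subgroup.closure s → c.val ∈ T ∧ (c⁻¹).val ∈ T := by
      intro c hc
      induction hc using Subgroup.closure_induction with
      | mem x hx => exact hgen x hx
      | one => exact ⟨hT1, by simpa using hT1⟩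
      | mul x y hx hy px py => exact ⟨hTmul _ px.1 _ py.1, by
          rw [mul_inv_rev]; exact hTmul _ py.2 _ px.2⟩
      | inv x hx px => exact ⟨px.2, by simpa using px.1⟩
    rintro x ⟨a, ha, rfl⟩ y ⟨b, hb, rfl⟩ hxy
    rw [red_comm, red_comm] at hxy
    have h1 : intRed m (a * b⁻¹) = 1 := by
      rw [map_mul, map_inv, hxy, mul_inv_cancel]
    have h2 : ((a * b⁻¹).val).map (Int.cast : ℤ → ZMod m) = 1 := congrArg Units.val h1
    have h3 : (a * b⁻¹).val = 1 := hker _ (hmem _ (mul_mem ha (inv_mem hb))).1 h2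
    have h4 : a * b⁻¹ = 1 := Units.ext h3
    have : a = b := by
      have := congrArg (· * b) h4
      simpa [mul_assoc] using this
    rw [this]

def glA2 : GL (Fin 2) ℤ := ⟨!![0, -1; 1, -1], !![-1, 1; -1, 0], by decide, by decide⟩

def L12 : List (Matrix (Fin 2) (Fin 2) ℤ) :=
  [1, !![0,-1;1,1], !![-1,-1;1,0], !![-1,0;0,-1], !![0,1;-1,-1], !![1,1;-1,0],
   !![0,1;1,0], !![-1,0;1,1], !![-1,-1;0,1], !![0,-1;-1,0], !![1,0;-1,-1], !![1,1;0,-1]]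

def L8 : List (Matrix (Fin 2) (Fin 2) ℤ) :=
  [1, !![-1,0;0,-1], !![0,1;-1,0], !![0,-1;1,0], !![1,0;0,-1], !![-1,0;0,1],
   !![0,-1;-1,0], !![0,1;1,0]]

def L6 : List (Matrix (Fin 2) (Fin 2) ℤ) :=
  [1, !![0,-1;1,-1], !![-1,1;-1,0], !![0,1;1,0], !![-1,0;-1,1], !![1,-1;0,-1]]

def L2 : List (Matrix (Fin 2) (Fin 2) ℤ) := [1, !![0,1;1,0]]

lemma castA (m : ℕ) : intRed m (glA ℤ) = glA (ZMod m) := by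
  apply Units.ext
  show (!![0,-1;1,1] : Matrix (Fin 2) (Fin 2) ℤ).map (Int.cast : ℤ → ZMod m) = !![0,-1;1,1]
  ext i j; fin_cases i <;> fin_cases j <;> simp [Matrix.map_apply]

lemma castB (m : ℕ) : intRed m (glB ℤ) = glB (ZMod m) := by
  apply Units.ext
  show (!![0,1;1,0] : Matrix (Fin 2) (Fin 2) ℤ).map (Int.cast : ℤ → ZMod m) = !![0,1;1,0]
  ext i j; fin_cases i <;> fin_cases j <;> simp [Matrix.map_apply]

lemma castC (m : ℕ) : intRed m (glC ℤ) = glC (ZMod m) := by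
  apply Units.ext
  show (!![1,0;0,-1] : Matrix (Fin 2) (Fin 2) ℤ).map (Int.cast : ℤ → ZMod m) = !![1,0;0,-1]
  ext i j; fin_cases i <;> fin_cases j <;> simp [Matrix.map_apply]

lemma castD (m : ℕ) : intRed m (glD ℤ) = glD (ZMod m) := by
  apply Units.ext
  show (!![0,1;-1,0] : Matrix (Fin 2) (Fin 2) ℤ).map (Int.cast : ℤ → ZMod m) = !![0,1;-1,0]
  ext i j; fin_cases i <;> fin_cases j <;> simp [Matrix.map_apply]

lemma caseAB_big (m n : ℕ) (hm : 3 ≤ m) :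
    SplitLiftable m n (Subgroup.closure {glA (ZMod m), glB (ZMod m)}) := by
  apply master m n {glA ℤ, glB ℤ} L12 (by decide) (by decide)
  · rintro g (rfl | rfl)
    · exact ⟨by decide, by decide⟩
    · exact ⟨by decide, by decide⟩
  · have hall : ∀ X ∈ L12, ∀ i j, (X i j).natAbs ≤ 1 := by decide
    exact fun X hX hmap => hker_of m hm X (hall X hX) hmap
  · rw [Set.image_insert_eq, Set.image_singleton, castA, castB]

lemma caseAB_two (n : ℕ) :
    SplitLiftable 2 n (Subgroup.closure {glA (ZMod 2), glB (ZMod 2)}) := by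
  apply master 2 n {glA2, glB ℤ} L6 (by decide) (by decide)
  · rintro g (rfl | rfl)
    · exact ⟨by decide, by decide⟩
    · exact ⟨by decide, by decide⟩
  · decide
  · rw [Set.image_insert_eq, Set.image_singleton, castB]
    have hA2 : intRed 2 glA2 = glA (ZMod 2) := Units.ext (by decide)
    rw [hA2]

lemma caseCD_big (m n : ℕ) (hm : 3 ≤ m) :
    SplitLiftable m n (Subgroup.closure {glC (ZMod m), glD (ZMod m)}) := by
  apply master m n {glC ℤ, glD ℤ} L8 (by decide) (by decide)
  · rintro g (rfl | rfl)
    · exact ⟨by decide, by decide⟩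
    · exact ⟨by decide, by decide⟩
  · have hall : ∀ X ∈ L8, ∀ i j, (X i j).natAbs ≤ 1 := by decide
    exact fun X hX hmap => hker_of m hm X (hall X hX) hmap
  · rw [Set.image_insert_eq, Set.image_singleton, castC, castD]

lemma caseCD_two (n : ℕ) :
    SplitLiftable 2 n (Subgroup.closure {glC (ZMod 2), glD (ZMod 2)}) := by
  apply master 2 n {glB ℤ} L2 (by decide) (by decide)
  · rintro g rfl
    exact ⟨by decide, by decide⟩
  · decide
  · have hC : glC (ZMod 2) = 1 := Units.ext (by decide)
    have hD : glD (ZMod 2) = intRed 2 (glB ℤ) := Units.ext (by decide)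
    rw [Set.image_singleton]
    apply le_antisymm
    · rw [Subgroup.closure_le]
      rintro x rfl
      rw [← hD]
      exact Subgroup.subset_closure (by simp)
    · rw [Subgroup.closure_le]
      rintro x (rfl | rfl)
      · rw [hC]; exact one_mem _
      · rw [hD]; exact Subgroup.subset_closure rfl

theorem statement_12 (m n : ℕ) (hm : 2 ≤ m) (hn : 1 ≤ n) :
    SplitLiftable m n (Subgroup.closure {glA (ZMod m), glB (ZMod m)}) ∧
    SplitLiftable m n (Subgroup.closure {glC (ZMod m), glD (ZMod m)}) := by
  rcases Nat.lt_or_ge m 3 with h | h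
  · have hm2 : m = 2 := by omega
    subst hm2
    exact ⟨caseAB_two n, caseCD_two n⟩
  · exact ⟨caseAB_big m n h, caseCD_big m n h⟩
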